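/- Let e, f, h be the standard basis of sl₂(ℂ) with [h,e] = 2e, [h,f] = −2f, [e,f] = h. The linear map R: sl₂(ℂ) → sl₂(ℂ) defined by R(e) = 0, R(f) = 4h, R(h) = −8e is a Rota–Baxter operator of weight 0 on the Lie algebra sl₂(ℂ). -/

import Mathlib

/-- On `sl₂(ℂ)` with standard basis `e, f, h` (`[h,e] = 2e`, `[h,f] = -2f`,
`[e,f] = h`), the map `R(e) = 0`, `R(f) = 4h`, `R(h) = -8e` is a Rota–Baxter
operator of weight 0. -/
theorem sl2_RB_operator {L : Type*} [LieRing L] [LieAlgebra ℂ L]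
    (b : Module.Basis (Fin 3) ℂ L) (e f h : L)
    (hbe : b 0 = e) (hbf : b 1 = f) (hbh : b 2 = h)
    (hhe : ⁅h, e⁆ = (2 : ℂ) • e) (hhf : ⁅h, f⁆ = (-2 : ℂ) • f) (hef : ⁅e, f⁆ = h)
    (R : L →ₗ[ℂ] L) (hRe : R e = 0) (hRf : R f = (4 : ℂ) • h) (hRh : R h = (-8 : ℂ) • e) :
    ∀ x y : L, ⁅R x, R y⁆ = R (⁅R x, y⁆ + ⁅x, R y⁆) := by
  have heh : ⁅e, h⁆ = (-2 : ℂ) • e := by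
    rw [← lie_skew, hhe]; module
  have hfh : ⁅f, h⁆ = (2 : ℂ) • f := by
    rw [← lie_skew, hhf]; module
  have hfe : ⁅f, e⁆ = (-1 : ℂ) • h := by
    rw [← lie_skew, hef]; module
  intro x y
  have hx : x = b.repr x 0 • e + b.repr x 1 • f + b.repr x 2 • h := by
    conv_lhs => rw [← b.sum_repr x]
    simp only [Fin.sum_univ_three, hbe, hbf, hbh]
  have hy : y = b.repr y 0 • e + b.repr y 1 • f + b.repr y 2 • h := by
    conv_lhs => rw [← b.sum_repr y]
    simp only [Fin.sum_univ_three, hbe, hbf, hbh]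
  rw [hx, hy]
  simp only [map_add, map_smul, hRe, hRf, hRh, lie_add, add_lie, smul_lie, lie_smul,
    lie_self, smul_zero, zero_lie, lie_zero, smul_smul, hhe, hhf, hef, heh, hfh, hfe,
    smul_add, add_zero, zero_add]
  module
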